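/- For every 0 < λ < 1 and every integer z ≥ 1: 1 - Q(z, λz) < (1/(1-λ)) · (1/√(2πz)) · e^{-z(λ - 1 - log λ)}, where Q(z,x) = Γ(z,x)/Γ(z); moreover for the lower incomplete gamma function, γ(z, λz) ≤ λ^z z^{z-1} e^{-λz}/(1-λ). -/

import Mathlib

open Real MeasureTheory

/-- Lower incomplete gamma function. -/
noncomputable def lowerGamma (z x : ℝ) : ℝ :=
  ∫ t in (0:ℝ)..x, t ^ (z - 1) * Real.exp (-t)

/-- Upper incomplete gamma function. -/
noncomputable def upperGamma (z x : ℝ) : ℝ :=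
  ∫ t in Set.Ioi x, t ^ (z - 1) * Real.exp (-t)

/-- Regularized upper incomplete gamma function. -/
noncomputable def regGammaQ (z x : ℝ) : ℝ := upperGamma z x / Real.Gamma z

open Stirling in
/-- Strict Stirling lower bound on the Stirling sequence. -/
lemma sqrt_pi_lt_stirlingSeq (n : ℕ) (hn : 1 ≤ n) : Real.sqrt π < stirlingSeq n := by
  obtain ⟨m, rfl⟩ : ∃ m, n = m + 1 := ⟨n - 1, by omega⟩
  have h1 : stirlingSeq (m + 2) < stirlingSeq (m + 1) := by
    have hs := log_stirlingSeq_diff_hasSum m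
    have hpos : 0 < Real.log (stirlingSeq (m + 1)) - Real.log (stirlingSeq (m + 2)) := by
      rw [← hs.tsum_eq]
      exact Summable.tsum_pos hs.summable (fun i => by positivity) 0 (by positivity)
    have h2 := stirlingSeq'_pos m
    have h3 := stirlingSeq'_pos (m + 1)
    exact (Real.log_lt_log_iff h3 h2).mp (by linarith)
  have h2 : Real.sqrt π ≤ stirlingSeq (m + 2) := by
    refine le_of_tendsto tendsto_stirlingSeq_sqrt_pi ?_
    filter_upwards [Filter.eventually_ge_atTop (m + 2)] with k hk
    obtain ⟨j, rfl⟩ : ∃ j, k = j + 1 := ⟨k - 1, by omega⟩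
    exact stirlingSeq'_antitone (by omega : m + 1 ≤ j)
  linarith

/-- Strict Stirling lower bound on factorials. -/
lemma sqrt_mul_pow_lt_factorial (n : ℕ) (hn : 1 ≤ n) :
    Real.sqrt (2 * π * n) * (n : ℝ) ^ n < (Nat.factorial n : ℝ) * Real.exp n := by
  have hπ := Real.pi_pos
  have hn0 : (0 : ℝ) < n := by exact_mod_cast hn
  have hS := sqrt_pi_lt_stirlingSeq n hn
  rw [Stirling.stirlingSeq] at hS
  have hd : 0 < Real.sqrt (2 * n) * ((n : ℝ) / Real.exp 1) ^ n := by positivity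
  rw [lt_div_iff₀ hd] at hS
  have e1 : Real.sqrt π * (Real.sqrt (2 * n) * ((n : ℝ) / Real.exp 1) ^ n)
      = Real.sqrt (2 * π * n) * (n : ℝ) ^ n / Real.exp n := by
    have hs2 : Real.sqrt π * Real.sqrt (2 * n) = Real.sqrt (2 * π * n) := by
      rw [← Real.sqrt_mul hπ.le, show π * (2 * (n:ℝ)) = 2 * π * n by ring]
    rw [div_pow, Real.exp_one_pow, ← hs2]
    ring
  rw [e1, div_lt_iff₀ (Real.exp_pos _)] at hS
  exact hS

theorem stmt16 (z : ℕ) (hz : 1 ≤ z) (lam : ℝ) (h0 : 0 < lam) (h1 : lam < 1) :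
    1 - regGammaQ (z : ℝ) (lam * z)
        < (1 / (1 - lam)) * (1 / Real.sqrt (2 * π * z)) *
            Real.exp (-(z : ℝ) * (lam - 1 - Real.log lam))
    ∧ lowerGamma (z : ℝ) (lam * z)
        ≤ lam ^ (z : ℕ) * (z : ℝ) ^ ((z : ℝ) - 1) * Real.exp (-lam * z) / (1 - lam) := by
  have hπ := Real.pi_pos
  have hz0 : (0 : ℝ) < z := by exact_mod_cast hz
  set x : ℝ := lam * z with hxdef
  have hx : 0 < x := by positivity
  have hxz : x < z := by
    calc x = lam * z := rfl
    _ < 1 * z := by gcongr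
    _ = z := one_mul _
  set p : ℝ := (z : ℝ) - 1 - x with hpdef
  have hp : -1 < p := by simp only [hpdef]; linarith
  have hp1 : p + 1 = (z : ℝ) - x := by ring
  have hp1pos : 0 < p + 1 := by rw [hp1]; linarith
  set c : ℝ := x ^ (x : ℝ) * Real.exp (-x) with hcdef
  have hc : 0 < c := by positivity
  -- the pointwise bound
  have key : ∀ t ∈ Set.Ioc (0:ℝ) x, t ^ ((z:ℝ) - 1) * Real.exp (-t) ≤ c * t ^ p := by
    rintro t ⟨ht, htx⟩
    have h1' : t ^ (x : ℝ) * Real.exp (-t) ≤ x ^ (x : ℝ) * Real.exp (-x) := by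
      rw [Real.rpow_def_of_pos ht, Real.rpow_def_of_pos hx, ← Real.exp_add, ← Real.exp_add]
      apply Real.exp_le_exp.mpr
      have hlog := Real.log_le_sub_one_of_pos (div_pos ht hx)
      rw [Real.log_div ht.ne' hx.ne'] at hlog
      have : x * (Real.log t - Real.log x) ≤ x * (t / x - 1) := by
        apply mul_le_mul_of_nonneg_left hlog hx.le
      have hxx : x * (t / x - 1) = t - x := by field_simp
      nlinarith
    have hsplit : t ^ ((z:ℝ) - 1) = t ^ p * t ^ (x : ℝ) := by
      rw [← Real.rpow_add ht, hpdef]; ring_nf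
    calc t ^ ((z:ℝ) - 1) * Real.exp (-t) = t ^ p * (t ^ (x:ℝ) * Real.exp (-t)) := by
          rw [hsplit]; ring
      _ ≤ t ^ p * (x ^ (x:ℝ) * Real.exp (-x)) :=
          mul_le_mul_of_nonneg_left h1' (Real.rpow_nonneg ht.le _)
      _ = c * t ^ p := by rw [hcdef]; ring
  -- integrability
  have hA : IntegrableOn (fun t : ℝ => t ^ ((z:ℝ) - 1) * Real.exp (-t)) (Set.Ioc 0 x) := by
    have heq : (fun t : ℝ => t ^ ((z:ℝ) - 1) * Real.exp (-t))
        = fun t : ℝ => t ^ (z - 1 : ℕ) * Real.exp (-t) := by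
      funext t
      rw [← Real.rpow_natCast t (z - 1), Nat.cast_sub hz, Nat.cast_one]
    rw [heq]
    exact ((continuous_pow (z - 1)).mul (Real.continuous_exp.comp continuous_neg)).integrableOn_Ioc
  have hB : IntegrableOn (fun t : ℝ => c * t ^ p) (Set.Ioc 0 x) := by
    rw [← intervalIntegrable_iff_integrableOn_Ioc_of_le hx.le]
    exact (intervalIntegral.intervalIntegrable_rpow' hp).const_mul c
  -- the integral bound
  have hmono : (∫ t in Set.Ioc (0:ℝ) x, t ^ ((z:ℝ) - 1) * Real.exp (-t))
      ≤ ∫ t in Set.Ioc (0:ℝ) x, c * t ^ p :=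
    setIntegral_mono_on hA hB measurableSet_Ioc key
  have hcompute : (∫ t in Set.Ioc (0:ℝ) x, c * t ^ p) = c * (x ^ (p + 1) / (p + 1)) := by
    rw [← intervalIntegral.integral_of_le hx.le, intervalIntegral.integral_const_mul,
      integral_rpow (Or.inl hp), Real.zero_rpow hp1pos.ne', sub_zero]
  -- identify with the target bound B
  have h1l : (0:ℝ) < 1 - lam := by linarith
  set B : ℝ := lam ^ (z : ℕ) * (z : ℝ) ^ ((z : ℝ) - 1) * Real.exp (-lam * z) / (1 - lam)
    with hBdef
  have hEqB : c * (x ^ (p + 1) / (p + 1)) = B := by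
    have e1 : x ^ (x:ℝ) * x ^ (p + 1) = lam ^ (z:ℕ) * ((z:ℝ) ^ ((z:ℝ) - 1) * z) := by
      have hzz' : (z:ℝ) ^ ((z:ℝ)) = (z:ℝ) ^ ((z:ℝ) - 1) * z := by
        have h := Real.rpow_add_one hz0.ne' ((z:ℝ) - 1)
        rwa [show ((z:ℝ) - 1) + 1 = (z:ℝ) by ring] at h
      rw [← Real.rpow_add hx, show (x : ℝ) + (p + 1) = (z:ℝ) by rw [hp1]; ring, hxdef,
        Real.mul_rpow h0.le hz0.le, Real.rpow_natCast, hzz']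
    have e2 : p + 1 = (z:ℝ) * (1 - lam) := by rw [hp1, hxdef]; ring
    have e3 : c * (x ^ (p + 1) / (p + 1)) = x ^ (x:ℝ) * x ^ (p + 1) * Real.exp (-x) / (p + 1) := by
      rw [hcdef]; ring
    rw [e3, e1, e2, hBdef, show -lam * (z:ℝ) = -x by rw [hxdef]; ring,
      div_eq_div_iff (by positivity) (by positivity : (1:ℝ) - lam ≠ 0)]
    ring
  have hlow : lowerGamma (z : ℝ) x ≤ B := by
    rw [lowerGamma, intervalIntegral.integral_of_le hx.le]
    calc (∫ t in Set.Ioc (0:ℝ) x, t ^ ((z:ℝ) - 1) * Real.exp (-t))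
        ≤ ∫ t in Set.Ioc (0:ℝ) x, c * t ^ p := hmono
      _ = c * (x ^ (p + 1) / (p + 1)) := hcompute
      _ = B := hEqB
  refine ⟨?_, hlow⟩
  -- first conjunct
  have hΓpos : 0 < Real.Gamma z := Real.Gamma_pos_of_pos hz0
  have hGI := Real.GammaIntegral_convergent hz0
  have hlow_eq : lowerGamma (z:ℝ) x = ∫ t in Set.Ioc (0:ℝ) x, Real.exp (-t) * t ^ ((z:ℝ) - 1) := by
    rw [lowerGamma, intervalIntegral.integral_of_le hx.le]
    exact setIntegral_congr_fun measurableSet_Ioc fun t _ => mul_comm _ _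
  have hup_eq : upperGamma (z:ℝ) x = ∫ t in Set.Ioi x, Real.exp (-t) * t ^ ((z:ℝ) - 1) := by
    rw [upperGamma]
    exact setIntegral_congr_fun measurableSet_Ioi fun t _ => mul_comm _ _
  have hsplitΓ : Real.Gamma z = lowerGamma (z:ℝ) x + upperGamma (z:ℝ) x := by
    rw [hlow_eq, hup_eq, Real.Gamma_eq_integral hz0, ← Set.Ioc_union_Ioi_eq_Ioi hx.le,
      setIntegral_union (Set.Ioc_disjoint_Ioi le_rfl) measurableSet_Ioi
        (hGI.mono_set Set.Ioc_subset_Ioi_self) (hGI.mono_set (Set.Ioi_subset_Ioi hx.le))]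
  have h1Q : 1 - regGammaQ (z:ℝ) x = lowerGamma (z:ℝ) x / Real.Gamma z := by
    rw [regGammaQ, eq_div_iff hΓpos.ne', sub_mul, one_mul, div_mul_cancel₀ _ hΓpos.ne']
    linarith [hsplitΓ]
  -- Gamma z = (z-1)!
  have hΓfact : Real.Gamma z = (Nat.factorial (z - 1) : ℝ) := by
    have hcast : ((z - 1 : ℕ) : ℝ) + 1 = (z:ℝ) := by rw [Nat.cast_sub hz]; ring
    rw [← hcast]
    exact Real.Gamma_nat_eq_factorial (z - 1)
  -- Stirling bound
  have hfact := sqrt_mul_pow_lt_factorial z hz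
  set S : ℝ := Real.sqrt (2 * π * z) with hSdef
  have hS : 0 < S := by positivity
  set F : ℝ := (Nat.factorial (z - 1) : ℝ) with hFdef
  have hF : 0 < F := by positivity
  set P : ℝ := (z : ℝ) ^ (z - 1 : ℕ) with hPdef
  have hPpos : 0 < P := by positivity
  have hPeq : (z : ℝ) ^ ((z : ℝ) - 1) = P := by
    rw [hPdef, ← Real.rpow_natCast (z:ℝ) (z - 1), Nat.cast_sub hz, Nat.cast_one]
  have hfact' : S * P < F * Real.exp z := by
    have hzz : (z : ℝ) ^ (z : ℕ) = P * z := by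
      rw [hPdef, ← pow_succ, show z - 1 + 1 = z by omega]
    have hzfact : (Nat.factorial z : ℝ) = z * F := by
      rw [hFdef, show z = (z - 1) + 1 by omega, Nat.factorial_succ,
        show (z - 1) + 1 = z by omega]
      push_cast
      ring

    rw [hzz, hzfact] at hfact
    have h2 : S * P * (z:ℝ) < F * Real.exp z * z := by linarith [hfact]
    exact lt_of_mul_lt_mul_right h2 hz0.le
  -- final computation
  have hexp : Real.exp (-(z : ℝ) * (lam - 1 - Real.log lam))
      = Real.exp z * Real.exp (-lam * z) * lam ^ (z : ℕ) := by
    rw [show -(z:ℝ) * (lam - 1 - Real.log lam)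
        = (z:ℕ) * Real.log lam + ((z:ℝ) + -lam * (z:ℝ)) by ring,
      Real.exp_add, Real.exp_add, Real.exp_nat_mul, Real.exp_log h0]
    ring
  rw [h1Q, hΓfact]
  have hstep : lowerGamma (z:ℝ) x / F ≤ B / F := by gcongr
  refine lt_of_le_of_lt hstep ?_
  clear_value B S F P
  have key2 : P / F < Real.exp z / S := by
    rw [div_lt_div_iff₀ hF hS]
    calc P * S = S * P := mul_comm _ _
      _ < F * Real.exp z := hfact'
      _ = Real.exp (z:ℝ) * F := mul_comm _ _
  rw [hexp, hBdef, hPeq]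
  have hApos : (0:ℝ) < lam ^ (z:ℕ) * Real.exp (-lam * z) / (1 - lam) := by positivity
  calc lam ^ (z:ℕ) * P * Real.exp (-lam * z) / (1 - lam) / F
      = lam ^ (z:ℕ) * Real.exp (-lam * z) / (1 - lam) * (P / F) := by ring
    _ < lam ^ (z:ℕ) * Real.exp (-lam * z) / (1 - lam) * (Real.exp z / S) :=
        mul_lt_mul_of_pos_left key2 hApos
    _ = 1 / (1 - lam) * (1 / S) * (Real.exp z * Real.exp (-lam * z) * lam ^ (z:ℕ)) := by
        field_simp
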